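/- arXiv:1606.06825 — 6 statements merged into one kernel-verified Lean document; each statement's English description precedes it below -/
import Mathlib

section
/- Let n ≥ 2 be an integer. There is a constant C = C(n) such that for every measurable ρ : ℝⁿ → [0,∞) with ∫_{ℝⁿ} ρ ln(1+ρ) dx < ∞, every x ∈ ℝⁿ and every s ∈ (0,1), the density maximal function satisfies (ln(1/s)) · Mρ(s,x) ≤ ‖ρ ln(1+ρ)‖_{L¹(ℝⁿ)} + C(n); in particular Mρ(s,x) ≤ (‖ρ ln(1+ρ)‖_{L¹(ℝⁿ)} + C(n)) (ln(1/s))^{-1}. -/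
open MeasureTheory Metric Set Filter

/-- For `n ≥ 2` there is a constant `C = C(n)` such that for every
nonnegative measurable `ρ` with `ρ ln(1+ρ) ∈ L¹(ℝⁿ)`, every `x` and every `s ∈ (0,1)`,
`(ln(1/s)) Mρ(s,x) ≤ ‖ρ ln(1+ρ)‖_{L¹} + C`; in particular
`Mρ(s,x) ≤ (‖ρ ln(1+ρ)‖_{L¹} + C) (ln(1/s))⁻¹`. -/
theorem stmt1 (n : ℕ) (hn : 2 ≤ n) :
    ∃ C : ℝ, 0 < C ∧
      ∀ ρ : EuclideanSpace ℝ (Fin n) → ℝ, Measurable ρ → (∀ y, 0 ≤ ρ y) →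
        Integrable (fun y => ρ y * Real.log (1 + ρ y)) →
        ∀ (x : EuclideanSpace ℝ (Fin n)) (s : ℝ), s ∈ Set.Ioo (0 : ℝ) 1 →
          Real.log (1 / s) * ∫ y in closedBall x s, ρ y ≤
              (∫ y, ρ y * Real.log (1 + ρ y)) + C ∧
          ∫ y in closedBall x s, ρ y ≤
              ((∫ y, ρ y * Real.log (1 + ρ y)) + C) * (Real.log (1 / s))⁻¹ := by
  set ω : ℝ := (volume (ball (0 : EuclideanSpace ℝ (Fin n)) 1)).toReal with hωdef
  have hωpos : 0 < ω := by
    refine ENNReal.toReal_pos ?_ measure_ball_lt_top.ne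
    exact (measure_ball_pos volume 0 one_pos).ne'
  refine ⟨ω + 1, by linarith, ?_⟩
  intro ρ hmeas hpos hInt x s hs
  obtain ⟨hs0, hs1⟩ := hs
  set L : ℝ := ∫ y, ρ y * Real.log (1 + ρ y) with hLdef
  have hLnn : 0 ≤ L := integral_nonneg fun y =>
    mul_nonneg (hpos y) (Real.log_nonneg (by linarith [hpos y]))
  have hlog : 0 < Real.log (1 / s) := Real.log_pos (by rw [lt_div_iff₀ hs0]; linarith)
  set t : ℝ := (s ^ (n - 1))⁻¹ with htdef
  have htpos : 0 < t := by positivity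
  have hlogt : Real.log (1 / s) ≤ Real.log (1 + t) := by
    have h1 : Real.log t = (n - 1 : ℕ) * Real.log (1 / s) := by
      rw [htdef, Real.log_inv, Real.log_pow, one_div, Real.log_inv]
      ring
    have h2 : (1 : ℝ) ≤ (n - 1 : ℕ) := by
      have : 1 ≤ n - 1 := by omega
      exact_mod_cast this
    have h3 : Real.log t ≤ Real.log (1 + t) :=
      Real.log_le_log htpos (by linarith)
    nlinarith
  have h1t : 0 < Real.log (1 + t) := lt_of_lt_of_le hlog hlogt
  have pointwise : ∀ y, ρ y ≤ t + ρ y * Real.log (1 + ρ y) / Real.log (1 + t) := by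
    intro y
    rcases le_or_gt (ρ y) t with h | h
    · have : 0 ≤ ρ y * Real.log (1 + ρ y) / Real.log (1 + t) :=
        div_nonneg (mul_nonneg (hpos y) (Real.log_nonneg (by linarith [hpos y]))) h1t.le
      linarith
    · have h2 : Real.log (1 + t) ≤ Real.log (1 + ρ y) :=
        Real.log_le_log (by linarith) (by linarith)
      have : ρ y ≤ ρ y * Real.log (1 + ρ y) / Real.log (1 + t) := by
        rw [le_div_iff₀ h1t]
        nlinarith [hpos y]
      linarith
  have hB : volume (closedBall x s) < ⊤ := measure_closedBall_lt_top
  have hg : IntegrableOn (fun y => t + ρ y * Real.log (1 + ρ y) / Real.log (1 + t))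
      (closedBall x s) := by
    exact (integrableOn_const hB.ne).add ((hInt.div_const _).integrableOn)
  have hρint : IntegrableOn ρ (closedBall x s) := by
    refine hg.mono' hmeas.aestronglyMeasurable.restrict ?_
    filter_upwards with y
    rw [Real.norm_of_nonneg (hpos y)]
    exact pointwise y
  have hvol : (volume (closedBall x s)).toReal = s ^ n * ω := by
    rw [Measure.addHaar_closedBall volume x hs0.le, ENNReal.toReal_mul,
      ENNReal.toReal_ofReal (by positivity), finrank_euclideanSpace_fin]
  have step1 : ∫ y in closedBall x s, ρ y ≤ t * (s ^ n * ω) + L / Real.log (1 + t) := by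
    have h1 : ∫ y in closedBall x s, ρ y ≤
        ∫ y in closedBall x s, (t + ρ y * Real.log (1 + ρ y) / Real.log (1 + t)) :=
      integral_mono hρint hg pointwise
    have h2 : ∫ y in closedBall x s, (t + ρ y * Real.log (1 + ρ y) / Real.log (1 + t)) =
        t * (s ^ n * ω) + (∫ y in closedBall x s, ρ y * Real.log (1 + ρ y)) / Real.log (1 + t) := by
      rw [integral_add (integrableOn_const (C := t) hB.ne) ((hInt.div_const _).integrableOn),
        setIntegral_const, integral_div, smul_eq_mul, measureReal_def, hvol, mul_comm]
    have h3 : (∫ y in closedBall x s, ρ y * Real.log (1 + ρ y)) ≤ L := by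
      refine setIntegral_le_integral hInt ?_
      filter_upwards with y
      exact mul_nonneg (hpos y) (Real.log_nonneg (by linarith [hpos y]))
    have h4 : (∫ y in closedBall x s, ρ y * Real.log (1 + ρ y)) / Real.log (1 + t)
        ≤ L / Real.log (1 + t) := by gcongr
    linarith
  have hts : t * s ^ n = s := by
    rw [htdef]
    have : s ^ n = s ^ (n - 1) * s := by
      rw [← pow_succ]
      congr 1
      omega
    rw [this]
    field_simp
  have hslog : s * Real.log (1 / s) ≤ 1 := by
    have := Real.log_le_sub_one_of_pos (show (0:ℝ) < 1 / s by positivity)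
    have h2 : Real.log (1 / s) ≤ 1 / s := by linarith
    calc s * Real.log (1 / s) ≤ s * (1 / s) := by
          exact mul_le_mul_of_nonneg_left h2 hs0.le
      _ = 1 := by field_simp
  have main : Real.log (1 / s) * ∫ y in closedBall x s, ρ y ≤ L + (ω + 1) := by
    have h5 : Real.log (1 / s) * ∫ y in closedBall x s, ρ y ≤
        Real.log (1 / s) * (t * (s ^ n * ω) + L / Real.log (1 + t)) :=
      mul_le_mul_of_nonneg_left step1 hlog.le
    have h6 : Real.log (1 / s) * (t * (s ^ n * ω)) = ω * (s * Real.log (1 / s)) := by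
      have : t * (s ^ n * ω) = s * ω := by rw [← mul_assoc, hts]
      rw [this]; ring
    have h7 : Real.log (1 / s) * (L / Real.log (1 + t)) ≤ L := by
      have heq : Real.log (1 / s) * (L / Real.log (1 + t)) =
          L * (Real.log (1 / s) / Real.log (1 + t)) := by ring
      have h8 : Real.log (1 / s) / Real.log (1 + t) ≤ 1 := (div_le_one h1t).2 hlogt
      rw [heq]; nlinarith
    have h9 : ω * (s * Real.log (1 / s)) ≤ ω := by nlinarith
    nlinarith [mul_le_mul_of_nonneg_left step1 hlog.le]
  refine ⟨main, ?_⟩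
  rw [← div_eq_mul_inv, le_div_iff₀ hlog]
  linarith [main]
end

section
/- Let ρ : ℝ² → [0,∞) be measurable, x ∈ ℝ², β > 1 and s ∈ (0,1). Suppose the density maximal function satisfies Mρ(σ,x) ≤ (ln(1/σ))^{-β} for every σ ∈ (0,s]. Then ∫_{B_s(x)} ln(1/|x-y|) ρ(y) dy ≤ (1 + 1/(β-1)) (ln(1/s))^{1-β}. -/
open MeasureTheory Metric Set Filter

/-- In `ℝ²`, if the density maximal function satisfies
`Mρ(σ,x) ≤ (ln(1/σ))^{-β}` for all `σ ∈ (0,s]` with `β > 1` and `s ∈ (0,1)`, then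
`∫_{B_s(x)} ln(1/|x-y|) ρ(y) dy ≤ (1 + 1/(β-1)) (ln(1/s))^{1-β}`. -/
theorem stmt2 (ρ : EuclideanSpace ℝ (Fin 2) → ℝ) (hmeas : Measurable ρ)
    (hρ : ∀ y, 0 ≤ ρ y) (x : EuclideanSpace ℝ (Fin 2)) (β s : ℝ)
    (hβ : 1 < β) (hs : s ∈ Set.Ioo (0 : ℝ) 1)
    (hdecay : ∀ σ : ℝ, 0 < σ → σ ≤ s →
      ∫ y in closedBall x σ, ρ y ≤ Real.log (1 / σ) ^ (-β)) :
    ∫ y in closedBall x s, Real.log (1 / dist x y) * ρ y ≤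
      (1 + 1 / (β - 1)) * Real.log (1 / s) ^ (1 - β) := by
  obtain ⟨hs0, hs1⟩ := hs
  set L : ℝ := Real.log (1 / s) with hLdef
  have hL : 0 < L := Real.log_pos (one_lt_one_div hs0 hs1)
  have hβ1 : (0:ℝ) < β - 1 := by linarith
  have hRpos : 0 < (1 + 1 / (β - 1)) * L ^ (1 - β) := by positivity
  set f : EuclideanSpace ℝ (Fin 2) → ℝ := fun y => Real.log (1 / dist x y) * ρ y with hfdef
  set B := closedBall x s with hBdef
  by_cases hInt : IntegrableOn f B
  swap
  · rw [integral_undef hInt]; exact le_of_lt hRpos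
  -- measurability
  have hgm : Measurable (fun y : EuclideanSpace ℝ (Fin 2) => Real.log (1 / dist x y)) :=
    Real.measurable_log.comp (measurable_const.div
      ((continuous_const.dist continuous_id).measurable))
  -- a.e. facts on the restricted measure
  have haex : ∀ᵐ y ∂(volume.restrict B), y ≠ x := by
    refine ae_restrict_of_ae ?_
    rw [ae_iff]
    simp only [not_ne_iff, setOf_eq_eq_singleton]
    exact measure_singleton x
  have h_glb : ∀ᵐ y ∂(volume.restrict B),
      L ≤ Real.log (1 / dist x y) ∧ 0 < dist x y := by
    filter_upwards [ae_restrict_mem measurableSet_closedBall, haex] with y hy hyx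
    have hd0 : 0 < dist x y := dist_pos.2 (Ne.symm hyx)
    have hds : dist x y ≤ s := by rw [mem_closedBall, dist_comm] at hy; exact hy
    refine ⟨?_, hd0⟩
    exact Real.log_le_log (by positivity) (one_div_le_one_div_of_le hd0 hds)
  -- ρ is integrable on B
  have hρint : IntegrableOn ρ B := by
    refine Integrable.mono' (hInt.const_mul L⁻¹) hmeas.aestronglyMeasurable ?_
    filter_upwards [h_glb] with y hy
    obtain ⟨hLl, hd0⟩ := hy
    rw [Real.norm_eq_abs, abs_of_nonneg (hρ y)]
    calc ρ y = L⁻¹ * (L * ρ y) := by field_simp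
      _ ≤ L⁻¹ * (Real.log (1 / dist x y) * ρ y) := by
          apply mul_le_mul_of_nonneg_left _ (inv_nonneg.2 hL.le)
          exact mul_le_mul_of_nonneg_right hLl (hρ y)
  -- decay hypothesis in lintegral form
  have hdecayE : ∀ σ : ℝ, 0 < σ → σ ≤ s →
      ∫⁻ y in closedBall x σ, ENNReal.ofReal (ρ y) ≤
        ENNReal.ofReal (Real.log (1 / σ) ^ (-β)) := by
    intro σ hσ hσs
    have hi : IntegrableOn ρ (closedBall x σ) :=
      hρint.mono_set (closedBall_subset_closedBall hσs)
    rw [← ofReal_integral_eq_lintegral_ofReal hi (Eventually.of_forall hρ)]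
    exact ENNReal.ofReal_le_ofReal (hdecay σ hσ hσs)
  set ν := (volume.restrict B).withDensity (fun y => ENNReal.ofReal (ρ y)) with hνdef
  have key1 : ∫⁻ y, ENNReal.ofReal (f y) ∂(volume.restrict B)
      = ∫⁻ y, ENNReal.ofReal (Real.log (1 / dist x y)) ∂ν := by
    rw [hνdef, lintegral_withDensity_eq_lintegral_mul _
      hmeas.ennreal_ofReal hgm.ennreal_ofReal]
    refine lintegral_congr_ae ?_
    filter_upwards [h_glb] with y hy
    obtain ⟨hLl, _⟩ := hy
    simp only [Pi.mul_apply, Function.comp_apply, hfdef]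
    rw [ENNReal.ofReal_mul (le_trans hL.le hLl), mul_comm]
  have hac : ν ≪ volume.restrict B := withDensity_absolutelyContinuous _ _
  have key2 : ∫⁻ y, ENNReal.ofReal (Real.log (1 / dist x y)) ∂ν
      = ∫⁻ t in Ioi (0:ℝ), ν {y | t < Real.log (1 / dist x y)} := by
    refine lintegral_eq_lintegral_meas_lt ν ?_ hgm.aemeasurable
    refine hac.ae_le ?_
    filter_upwards [h_glb] with y hy
    exact le_trans hL.le hy.1
  have key3 : ∀ t ∈ Ioi (0:ℝ), ν {y | t < Real.log (1 / dist x y)}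
      ≤ ENNReal.ofReal (max L t ^ (-β)) := by
    intro t ht
    rw [mem_Ioi] at ht
    have hsub : {y | t < Real.log (1 / dist x y)} ⊆ closedBall x (Real.exp (-t)) := by
      intro y hy
      simp only [mem_setOf_eq] at hy
      have hd0 : 0 < dist x y := by
        rcases eq_or_lt_of_le (dist_nonneg (x := x) (y := y)) with h | h
        · exfalso; rw [← h] at hy; simp at hy; linarith
        · exact h
      have h1 : Real.exp t < 1 / dist x y :=
        (Real.lt_log_iff_exp_lt (by positivity)).1 hy
      rw [mem_closedBall, dist_comm]
      have h2 : dist x y < Real.exp (-t) := by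
        rw [Real.exp_neg]
        rw [one_div] at h1
        have := inv_strictAnti₀ (Real.exp_pos t) h1
        rwa [inv_inv] at this
      exact h2.le
    calc ν {y | t < Real.log (1 / dist x y)}
        ≤ ν (closedBall x (Real.exp (-t))) := measure_mono hsub
      _ = ∫⁻ y in closedBall x (Real.exp (-t)) ∩ B, ENNReal.ofReal (ρ y) := by
          rw [hνdef, withDensity_apply _ measurableSet_closedBall,
            Measure.restrict_restrict measurableSet_closedBall]
      _ = ∫⁻ y in closedBall x (min (Real.exp (-t)) s), ENNReal.ofReal (ρ y) := by
          have hset : closedBall x (Real.exp (-t)) ∩ B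
              = closedBall x (min (Real.exp (-t)) s) := by
            rw [hBdef]; ext y; simp [mem_closedBall, le_min_iff]
          rw [hset]
      _ ≤ ENNReal.ofReal (Real.log (1 / min (Real.exp (-t)) s) ^ (-β)) :=
          hdecayE _ (lt_min (Real.exp_pos _) hs0) (min_le_right _ _)
      _ = ENNReal.ofReal (max L t ^ (-β)) := by
          congr 2
          rcases le_total (Real.exp (-t)) s with h | h
          · have h1 : L ≤ t := by
              have := Real.log_le_log (Real.exp_pos _) h
              rw [Real.log_exp] at this
              have hlogs : Real.log s = -L := by
                rw [hLdef, one_div, Real.log_inv, neg_neg]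
              rw [hlogs] at this; linarith
            rw [min_eq_left h, max_eq_right h1, one_div, ← Real.exp_neg, neg_neg,
              Real.log_exp]
          · have h1 : t ≤ L := by
              have := Real.log_le_log hs0 h
              rw [Real.log_exp] at this
              have hlogs : Real.log s = -L := by
                rw [hLdef, one_div, Real.log_inv, neg_neg]
              rw [hlogs] at this; linarith
            rw [min_eq_right h, max_eq_left h1]
  -- the real auxiliary integral
  have hIoc : IntegrableOn (fun t : ℝ => max L t ^ (-β)) (Ioc 0 L) := by
    have hc : IntegrableOn (fun _ : ℝ => L ^ (-β)) (Ioc 0 L) :=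
      integrableOn_const measure_Ioc_lt_top.ne
    refine hc.congr_fun ?_ measurableSet_Ioc
    intro t ht
    show L ^ (-β) = max L t ^ (-β)
    rw [max_eq_left ht.2]
  have hIoi : IntegrableOn (fun t : ℝ => max L t ^ (-β)) (Ioi L) := by
    refine (integrableOn_Ioi_rpow_of_lt (a := -β) (by linarith) hL).congr_fun ?_ measurableSet_Ioi
    intro t ht
    show t ^ (-β) = max L t ^ (-β)
    rw [max_eq_right (le_of_lt ht)]
  have hsplit : Ioi (0:ℝ) = Ioc 0 L ∪ Ioi L := (Ioc_union_Ioi_eq_Ioi hL.le).symm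
  have hIoi0 : IntegrableOn (fun t : ℝ => max L t ^ (-β)) (Ioi 0) := by
    rw [hsplit]; exact hIoc.union hIoi
  have hval : ∫ t in Ioi (0:ℝ), max L t ^ (-β) = (1 + 1/(β-1)) * L ^ (1-β) := by
    rw [hsplit, setIntegral_union (Ioc_disjoint_Ioi le_rfl) measurableSet_Ioi hIoc hIoi]
    have e1 : ∫ t in Ioc (0:ℝ) L, max L t ^ (-β) = L * L ^ (-β) := by
      rw [setIntegral_congr_fun measurableSet_Ioc (g := fun _ : ℝ => L ^ (-β))
        (fun t ht => by rw [max_eq_left ht.2])]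
      simp [Real.volume_Ioc, ENNReal.toReal_ofReal hL.le, hL.le]
    have e2 : ∫ t in Ioi L, max L t ^ (-β) = L ^ (1-β) / (β-1) := by
      rw [setIntegral_congr_fun measurableSet_Ioi (g := fun t : ℝ => t ^ (-β))
        (fun t ht => by rw [max_eq_right (le_of_lt ht)])]
      rw [integral_Ioi_rpow_of_lt (a := -β) (by linarith) hL]
      rw [show -β + 1 = 1 - β by ring]
      have h1 : (1:ℝ) - β ≠ 0 := by linarith
      field_simp
      ring
    rw [e1, e2]
    have e3 : L * L ^ (-β) = L ^ (1-β) := by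
      rw [show (1:ℝ) - β = 1 + -β by ring, Real.rpow_add hL, Real.rpow_one]
    rw [e3]
    field_simp
  have key4 : ∫⁻ t in Ioi (0:ℝ), ENNReal.ofReal (max L t ^ (-β))
      = ENNReal.ofReal ((1 + 1/(β-1)) * L ^ (1-β)) := by
    rw [← ofReal_integral_eq_lintegral_ofReal hIoi0 (Eventually.of_forall fun t =>
      Real.rpow_nonneg (le_trans hL.le (le_max_left _ _)) _), hval]
  -- conclusion
  have hfm : Measurable f := hgm.mul hmeas
  have hfnn : 0 ≤ᵐ[volume.restrict B] f := by
    filter_upwards [h_glb] with y hy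
    exact mul_nonneg (le_trans hL.le hy.1) (hρ y)
  rw [integral_eq_lintegral_of_nonneg_ae hfnn hfm.aestronglyMeasurable]
  refine ENNReal.toReal_le_of_le_ofReal hRpos.le ?_
  calc ∫⁻ y, ENNReal.ofReal (f y) ∂(volume.restrict B)
      = ∫⁻ y, ENNReal.ofReal (Real.log (1 / dist x y)) ∂ν := key1
    _ = ∫⁻ t in Ioi (0:ℝ), ν {y | t < Real.log (1 / dist x y)} := key2
    _ ≤ ∫⁻ t in Ioi (0:ℝ), ENNReal.ofReal (max L t ^ (-β)) :=
        setLIntegral_mono (ENNReal.measurable_ofReal.comp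
          ((measurable_const.max measurable_id).pow_const _)) key3
    _ = ENNReal.ofReal ((1 + 1/(β-1)) * L ^ (1-β)) := key4
end

section
/- Let ρ : ℝ³ → [0,∞) be measurable, x ∈ ℝ³, β > 1 and s > 0. Suppose the density maximal function satisfies Mρ(σ,x) ≤ σ^β for every σ ∈ (0,s]. Then ∫_{B_s(x)} |x-y|^{-1} ρ(y) dy ≤ (1 + 1/(β-1)) s^{β-1}. -/
open MeasureTheory Metric Set Filter

/-- In `ℝ³`, if the density maximal function satisfies `Mρ(σ,x) ≤ σ^β`
for all `σ ∈ (0,s]` with `β > 1` and `s > 0`, then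
`∫_{B_s(x)} |x-y|⁻¹ ρ(y) dy ≤ (1 + 1/(β-1)) s^{β-1}`. -/
theorem stmt3 (ρ : EuclideanSpace ℝ (Fin 3) → ℝ) (hmeas : Measurable ρ)
    (hρ : ∀ y, 0 ≤ ρ y) (x : EuclideanSpace ℝ (Fin 3)) (β s : ℝ)
    (hβ : 1 < β) (hs : 0 < s)
    (hdecay : ∀ σ : ℝ, 0 < σ → σ ≤ s → ∫ y in closedBall x σ, ρ y ≤ σ ^ β) :
    ∫ y in closedBall x s, (dist x y)⁻¹ * ρ y ≤ (1 + 1 / (β - 1)) * s ^ (β - 1) := by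
  have hβ1 : (0 : ℝ) < β - 1 := by linarith
  have hRHS : 0 ≤ (1 + 1 / (β - 1)) * s ^ (β - 1) := by
    apply mul_nonneg
    · have : 0 ≤ 1 / (β - 1) := by positivity
      linarith
    · exact Real.rpow_nonneg hs.le _
  by_cases hint : IntegrableOn (fun y => (dist x y)⁻¹ * ρ y) (closedBall x s) volume
  swap
  · rw [integral_undef hint]; exact hRHS
  -- the exceptional point x is negligible
  have hxae : ∀ᵐ y ∂(volume.restrict (closedBall x s) :
      Measure (EuclideanSpace ℝ (Fin 3))), y ≠ x := by
    refine ae_restrict_of_ae ?_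
    rw [ae_iff]
    have : {y : EuclideanSpace ℝ (Fin 3) | ¬ y ≠ x} = {x} := by
      ext y; simp
    rw [this]
    exact measure_singleton x
  -- ρ is integrable on the ball
  have hρint : IntegrableOn ρ (closedBall x s) volume := by
    refine Integrable.mono' (hint.const_mul s) hmeas.aestronglyMeasurable ?_
    filter_upwards [hxae, ae_restrict_mem measurableSet_closedBall] with y hy hys
    have hd : 0 < dist x y := by
      rw [dist_pos]; exact fun h => hy h.symm
    have hds : dist x y ≤ s := by rwa [dist_comm, ← mem_closedBall]
    have h1 : 1 ≤ s * (dist x y)⁻¹ := by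
      rw [← div_eq_mul_inv, le_div_iff₀ hd]
      simpa using hds
    rw [Real.norm_eq_abs, abs_of_nonneg (hρ y)]
    calc ρ y = 1 * ρ y := (one_mul _).symm
      _ ≤ (s * (dist x y)⁻¹) * ρ y := by
          exact mul_le_mul_of_nonneg_right h1 (hρ y)
      _ = s * ((dist x y)⁻¹ * ρ y) := by ring
  -- decay in ENNReal form
  have hρσ : ∀ σ : ℝ, 0 < σ → σ ≤ s →
      ∫⁻ y in closedBall x σ, ENNReal.ofReal (ρ y) ≤ ENNReal.ofReal (σ ^ β) := by
    intro σ hσ hσs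
    rw [← ofReal_integral_eq_lintegral_ofReal
      (hρint.mono_set (closedBall_subset_closedBall hσs))
      (ae_of_all _ hρ)]
    exact ENNReal.ofReal_le_ofReal (hdecay σ hσ hσs)
  -- the weighted measure
  set ν : Measure (EuclideanSpace ℝ (Fin 3)) :=
    (volume.restrict (closedBall x s)).withDensity (fun y => ENNReal.ofReal (ρ y)) with hν
  have hdistmeas : Measurable fun y : EuclideanSpace ℝ (Fin 3) => (dist x y)⁻¹ :=
    (measurable_const.dist measurable_id).inv
  -- superlevel set bound
  have hlevel : ∀ t : ℝ, 0 < t →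
      ν {y | t < (dist x y)⁻¹} ≤ ENNReal.ofReal ((min (1 / t) s) ^ β) := by
    intro t ht
    have hAmeas : MeasurableSet {y : EuclideanSpace ℝ (Fin 3) | t < (dist x y)⁻¹} :=
      measurableSet_lt measurable_const hdistmeas
    rw [hν, withDensity_apply _ hAmeas, Measure.restrict_restrict hAmeas]
    have hsub : {y : EuclideanSpace ℝ (Fin 3) | t < (dist x y)⁻¹} ∩ closedBall x s ⊆
        closedBall x (min (1 / t) s) := by
      rintro y ⟨hy1, hy2⟩
      simp only [mem_setOf_eq] at hy1
      have hd : 0 < dist x y := by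
        by_contra h
        push_neg at h
        have : dist x y = 0 := le_antisymm h dist_nonneg
        rw [this] at hy1
        simp at hy1
        linarith
      have hdt : dist x y < 1 / t := by
        rw [one_div]
        have := (inv_lt_inv₀ (inv_pos.mpr hd) ht).mpr hy1
        rwa [inv_inv] at this
      have hds : dist x y ≤ s := by rw [mem_closedBall] at hy2; rwa [dist_comm]
      rw [mem_closedBall, dist_comm]
      exact le_min hdt.le hds
    calc ∫⁻ y in {y | t < (dist x y)⁻¹} ∩ closedBall x s, ENNReal.ofReal (ρ y)
        ≤ ∫⁻ y in closedBall x (min (1 / t) s), ENNReal.ofReal (ρ y) :=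
          lintegral_mono_set hsub
      _ ≤ ENNReal.ofReal ((min (1 / t) s) ^ β) :=
          hρσ _ (lt_min (by positivity) hs) (min_le_right _ _)
  -- compute the t-integral bound
  have hsinv : (0:ℝ) < 1 / s := by positivity
  have hIoi : Ioc (0:ℝ) (1/s) ∪ Ioi (1/s) = Ioi 0 := Ioc_union_Ioi_eq_Ioi hsinv.le
  have hpart1 : ∫⁻ t in Ioc (0:ℝ) (1/s), ENNReal.ofReal ((min (1 / t) s) ^ β)
      = ENNReal.ofReal (s ^ (β - 1)) := by
    have hcongr : ∀ t ∈ Ioc (0:ℝ) (1/s),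
        ENNReal.ofReal ((min (1 / t) s) ^ β) = ENNReal.ofReal (s ^ β) := by
      intro t ⟨ht0, hts⟩
      have : s ≤ 1 / t := by
        rw [le_div_iff₀ ht0]
        rw [le_div_iff₀ hs] at hts
        linarith [hts]
      rw [min_eq_right this]
    rw [setLIntegral_congr_fun measurableSet_Ioc hcongr,
      setLIntegral_const, Real.volume_Ioc]
    rw [← ENNReal.ofReal_mul (Real.rpow_nonneg hs.le _)]
    congr 1
    rw [sub_zero, Real.rpow_sub hs, Real.rpow_one]
    ring
  have hpart2 : ∫⁻ t in Ioi (1/s), ENNReal.ofReal ((min (1 / t) s) ^ β)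
      = ENNReal.ofReal (s ^ (β - 1) / (β - 1)) := by
    have hcongr : ∀ t ∈ Ioi (1/s),
        ENNReal.ofReal ((min (1 / t) s) ^ β) = ENNReal.ofReal (t ^ (-β)) := by
      intro t ht
      have ht0 : 0 < t := lt_trans hsinv ht
      have h1t : 1 / t < s := by
        rw [div_lt_iff₀ ht0, mul_comm]
        rwa [mem_Ioi, div_lt_iff₀ hs] at ht
      rw [min_eq_left h1t.le]
      congr 1
      rw [one_div, Real.inv_rpow ht0.le, ← Real.rpow_neg ht0.le]
    rw [setLIntegral_congr_fun measurableSet_Ioi hcongr]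
    have hβ' : (-β) < -1 := by linarith
    rw [← ofReal_integral_eq_lintegral_ofReal
      (integrableOn_Ioi_rpow_of_lt hβ' hsinv) ?_]
    · congr 1
      rw [integral_Ioi_rpow_of_lt hβ' hsinv]
      have hpow : ((1:ℝ)/s) ^ (-β + 1) = s ^ (β - 1) := by
        rw [one_div, Real.inv_rpow hs.le, ← Real.rpow_neg hs.le]
        ring_nf
      rw [hpow, show (-β + 1 : ℝ) = -(β - 1) by ring]
      have hne : β - 1 ≠ 0 := ne_of_gt hβ1
      rw [div_neg, neg_div, neg_neg]
    · filter_upwards [ae_restrict_mem measurableSet_Ioi] with t ht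
      exact Real.rpow_nonneg (lt_trans hsinv ht).le _
  -- main chain in ENNReal
  have hmain : ∫⁻ y in closedBall x s, ENNReal.ofReal ((dist x y)⁻¹ * ρ y)
      ≤ ENNReal.ofReal ((1 + 1 / (β - 1)) * s ^ (β - 1)) := by
    have hrw : ∫⁻ y in closedBall x s, ENNReal.ofReal ((dist x y)⁻¹ * ρ y)
        = ∫⁻ y, ENNReal.ofReal ((dist x y)⁻¹) ∂ν := by
      rw [hν, lintegral_withDensity_eq_lintegral_mul _
        (show Measurable fun y => ENNReal.ofReal (ρ y) from ENNReal.measurable_ofReal.comp hmeas)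
        (show Measurable fun y => ENNReal.ofReal ((dist x y)⁻¹) from
          ENNReal.measurable_ofReal.comp hdistmeas)]
      apply lintegral_congr
      intro y
      simp only [Pi.mul_apply, Function.comp_apply]
      rw [← ENNReal.ofReal_mul (hρ y), mul_comm]
    rw [hrw, lintegral_eq_lintegral_meas_lt ν
      (ae_of_all _ fun y => inv_nonneg.mpr dist_nonneg) hdistmeas.aemeasurable]
    calc ∫⁻ t in Ioi (0:ℝ), ν {y | t < (dist x y)⁻¹}
        ≤ ∫⁻ t in Ioi (0:ℝ), ENNReal.ofReal ((min (1 / t) s) ^ β) := by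
          exact setLIntegral_mono_ae' measurableSet_Ioi
            (ae_of_all _ fun t ht => hlevel t ht)
      _ = (∫⁻ t in Ioc (0:ℝ) (1/s), ENNReal.ofReal ((min (1 / t) s) ^ β))
          + ∫⁻ t in Ioi (1/s), ENNReal.ofReal ((min (1 / t) s) ^ β) := by
          rw [← hIoi, lintegral_union measurableSet_Ioi Ioc_disjoint_Ioi_same]
      _ = ENNReal.ofReal (s ^ (β - 1)) + ENNReal.ofReal (s ^ (β - 1) / (β - 1)) := by
          rw [hpart1, hpart2]
      _ = ENNReal.ofReal ((1 + 1 / (β - 1)) * s ^ (β - 1)) := by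
          rw [← ENNReal.ofReal_add (Real.rpow_nonneg hs.le _) (by positivity)]
          congr 1
          field_simp
  -- convert back to the Bochner integral
  rw [integral_eq_lintegral_of_nonneg_ae
    (ae_of_all _ fun y => mul_nonneg (inv_nonneg.mpr dist_nonneg) (hρ y))
    ((hdistmeas.mul hmeas).aestronglyMeasurable)]
  exact ENNReal.toReal_le_of_le_ofReal hRHS hmain
end

section
/- Let n ≥ 1 be an integer, ρ : ℝⁿ → [0,∞) measurable, x ∈ ℝⁿ, κ > 0, σ ∈ (-κ, 0) and s > 0. Suppose the density maximal function satisfies Mρ(r,x) ≤ r^κ for every r ∈ (0,s]. Then ∫_{B_s(x)} |x-y|^{σ} ρ(y) dy ≤ (1 + |σ|/(κ+σ)) s^{κ+σ}. -/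
open MeasureTheory Metric Set Filter

/-- In `ℝⁿ`, if the density maximal function satisfies `Mρ(r,x) ≤ r^κ` for
all `r ∈ (0,s]`, with `κ > 0` and `σ ∈ (-κ,0)`, then
`∫_{B_s(x)} |x-y|^σ ρ(y) dy ≤ (1 + |σ|/(κ+σ)) s^{κ+σ}`. -/
theorem stmt4 (n : ℕ) (hn : 1 ≤ n) (ρ : EuclideanSpace ℝ (Fin n) → ℝ)
    (hmeas : Measurable ρ) (hρ : ∀ y, 0 ≤ ρ y)
    (x : EuclideanSpace ℝ (Fin n)) (κ σ s : ℝ)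
    (hκ : 0 < κ) (hσ : σ ∈ Set.Ioo (-κ) (0 : ℝ)) (hs : 0 < s)
    (hdecay : ∀ r : ℝ, 0 < r → r ≤ s → ∫ y in closedBall x r, ρ y ≤ r ^ κ) :
    ∫ y in closedBall x s, dist x y ^ σ * ρ y ≤ (1 + |σ| / (κ + σ)) * s ^ (κ + σ) := by
  have hσ0 : σ < 0 := hσ.2
  have hκσ : 0 < κ + σ := by have := hσ.1; linarith
  have habs : |σ| = -σ := abs_of_neg hσ0
  have hRHSpos : 0 < (1 + |σ| / (κ + σ)) * s ^ (κ + σ) := by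
    have h1 : 0 < 1 + |σ| / (κ + σ) := by positivity
    have h2 : 0 < s ^ (κ + σ) := Real.rpow_pos_of_pos hs _
    positivity
  set f : EuclideanSpace ℝ (Fin n) → ℝ := fun y => dist x y ^ σ * ρ y with hf
  have hgm : Measurable (fun a : ℝ => if a = 0 then 0 else Real.exp (Real.log a * σ)) := by
    refine Measurable.ite ?_ measurable_const ((Real.measurable_log.mul measurable_const).exp)
    simp only [Set.setOf_eq_eq_singleton]; exact measurableSet_singleton (0:ℝ)
  have hdistm : Measurable (fun y : EuclideanSpace ℝ (Fin n) => dist x y ^ σ) := by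
    have heq : (fun y : EuclideanSpace ℝ (Fin n) => dist x y ^ σ)
        = fun y => (fun a : ℝ => if a = 0 then 0 else Real.exp (Real.log a * σ)) (dist x y) := by
      funext y
      rcases eq_or_lt_of_le (dist_nonneg : 0 ≤ dist x y) with h | h
      · simp [← h, Real.zero_rpow hσ0.ne]
      · simp only [h.ne', if_false]
        rw [Real.rpow_def_of_pos h]
    rw [heq]
    exact hgm.comp (measurable_const.dist measurable_id)
  have hfmeas : Measurable f := hdistm.mul hmeas
  have hfnn : ∀ y, 0 ≤ f y := fun y =>
    mul_nonneg (Real.rpow_nonneg dist_nonneg _) (hρ y)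
  by_cases hint : IntegrableOn f (closedBall x s) volume
  swap
  · rw [MeasureTheory.integral_undef hint]
    exact hRHSpos.le
  -- nontriviality of the space and a.e. positivity of the distance
  haveI : Nontrivial (EuclideanSpace ℝ (Fin n)) := by
    refine ⟨EuclideanSpace.single (⟨0, hn⟩ : Fin n) (1 : ℝ), 0, ?_⟩
    intro h
    have := congrArg (fun v : EuclideanSpace ℝ (Fin n) => v (⟨0, hn⟩ : Fin n)) h
    simp [EuclideanSpace.single] at this
  have hae_pos : ∀ᵐ y ∂(volume.restrict (closedBall x s)), 0 < dist x y := by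
    refine ae_restrict_of_ae ?_
    have hnull : volume ({x} : Set (EuclideanSpace ℝ (Fin n))) = 0 := measure_singleton x
    refine measure_mono_null ?_ hnull
    intro y hy
    simp only [mem_compl_iff, mem_setOf_eq, not_lt] at hy
    have : dist x y = 0 := le_antisymm hy dist_nonneg
    simp [dist_eq_zero.mp this]
  -- ρ is integrable on the ball
  have hρint : IntegrableOn ρ (closedBall x s) volume := by
    refine Integrable.mono' (hint.const_mul (s ^ (-σ))) hmeas.aestronglyMeasurable ?_
    filter_upwards [hae_pos, ae_restrict_mem measurableSet_closedBall] with y hy hmem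
    rw [Real.norm_eq_abs, abs_of_nonneg (hρ y)]
    have hss : s ^ σ ≤ dist x y ^ σ :=
      Real.rpow_le_rpow_of_nonpos hy (mem_closedBall'.mp hmem) hσ0.le
    have hone : s ^ (-σ) * s ^ σ = 1 := by
      rw [← Real.rpow_add hs]; simp
    calc ρ y = s ^ (-σ) * s ^ σ * ρ y := by rw [hone, one_mul]
      _ ≤ s ^ (-σ) * (dist x y ^ σ * ρ y) := by
          rw [mul_assoc]
          exact mul_le_mul_of_nonneg_left (mul_le_mul_of_nonneg_right hss (hρ y))
            (Real.rpow_nonneg hs.le _)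
  set μ₀ := volume.restrict (closedBall x s) with hμ₀
  set ν := μ₀.withDensity (fun y => ENNReal.ofReal (ρ y)) with hν
  have hρmeas' : Measurable fun y => ENNReal.ofReal (ρ y) := hmeas.ennreal_ofReal
  -- ν of closed balls of radius ≤ s
  have hν_ball : ∀ r : ℝ, 0 < r → r ≤ s → ν (closedBall x r) ≤ ENNReal.ofReal (r ^ κ) := by
    intro r hr hrs
    have hsub : closedBall x r ⊆ closedBall x s := closedBall_subset_closedBall hrs
    rw [hν, withDensity_apply _ measurableSet_closedBall, hμ₀,
      Measure.restrict_restrict measurableSet_closedBall,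
      inter_eq_self_of_subset_left hsub,
      ← ofReal_integral_eq_lintegral_ofReal (hρint.mono_set hsub)
        (Eventually.of_forall hρ)]
    exact ENNReal.ofReal_le_ofReal (hdecay r hr hrs)
  -- ν is finite
  haveI : IsFiniteMeasure ν := by
    constructor
    rw [hν, withDensity_apply _ MeasurableSet.univ, Measure.restrict_univ, hμ₀,
      ← ofReal_integral_eq_lintegral_ofReal hρint (Eventually.of_forall hρ)]
    exact ENNReal.ofReal_lt_top
  -- the complement of the ball is ν-null
  have hν_compl : ν (closedBall x s)ᶜ = 0 := by
    rw [hν, withDensity_apply _ measurableSet_closedBall.compl, hμ₀,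
      Measure.restrict_restrict measurableSet_closedBall.compl, compl_inter_self]
    simp
  -- rewrite the LHS via the Lebesgue integral
  rw [integral_eq_lintegral_of_nonneg_ae (Eventually.of_forall hfnn)
    hfmeas.aestronglyMeasurable]
  refine ENNReal.toReal_le_of_le_ofReal hRHSpos.le ?_
  -- move the density into the measure
  have hswap : ∫⁻ y, ENNReal.ofReal (f y) ∂μ₀
      = ∫⁻ y, ENNReal.ofReal (dist x y ^ σ) ∂ν := by
    rw [hν, lintegral_withDensity_eq_lintegral_mul _ hρmeas' hdistm.ennreal_ofReal]
    refine lintegral_congr fun y => ?_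
    simp only [hf, Pi.mul_apply]
    rw [ENNReal.ofReal_mul (Real.rpow_nonneg dist_nonneg _), mul_comm]
  rw [hswap]
  -- layer cake
  have hlc : ∫⁻ y, ENNReal.ofReal (dist x y ^ σ) ∂ν
      = ∫⁻ t in Ioi (0:ℝ), ν {y | t < dist x y ^ σ} :=
    lintegral_eq_lintegral_meas_lt ν
      (Eventually.of_forall fun y => Real.rpow_nonneg dist_nonneg _)
      hdistm.aemeasurable
  rw [hlc]
  -- pointwise bound on the distribution function
  have hdistr : ∀ t : ℝ, 0 < t →
      ν {y | t < dist x y ^ σ} ≤ ENNReal.ofReal ((min (t ^ (1/σ)) s) ^ κ) := by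
    intro t ht
    have hrt : 0 < t ^ (1/σ) := Real.rpow_pos_of_pos ht _
    have hmin : 0 < min (t ^ (1/σ)) s := lt_min hrt hs
    have hsub : {y | t < dist x y ^ σ} ∩ closedBall x s
        ⊆ closedBall x (min (t ^ (1/σ)) s) := by
      rintro y ⟨hy1, hy2⟩
      simp only [mem_setOf_eq] at hy1
      have hdpos : 0 < dist x y := by
        by_contra h
        push_neg at h
        have : dist x y = 0 := le_antisymm h dist_nonneg
        rw [this, Real.zero_rpow hσ0.ne] at hy1
        exact absurd hy1 (not_lt.mpr ht.le)
      have ht' : (t ^ (1/σ)) ^ σ = t := by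
        rw [← Real.rpow_mul ht.le, one_div, inv_mul_cancel₀ hσ0.ne, Real.rpow_one]
      have hlt : dist x y < t ^ (1/σ) := by
        have := (Real.rpow_lt_rpow_iff_of_neg hrt hdpos hσ0)
        rw [ht'] at this
        exact this.mp hy1
      rw [mem_closedBall']
      exact le_min hlt.le (mem_closedBall'.mp hy2)
    calc ν {y | t < dist x y ^ σ}
        ≤ ν (({y | t < dist x y ^ σ} ∩ closedBall x s) ∪ (closedBall x s)ᶜ) := by
          refine measure_mono fun y hy => ?_
          by_cases hmem : y ∈ closedBall x s
          · exact Or.inl ⟨hy, hmem⟩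
          · exact Or.inr hmem
      _ ≤ ν ({y | t < dist x y ^ σ} ∩ closedBall x s) + ν (closedBall x s)ᶜ :=
          measure_union_le _ _
      _ = ν ({y | t < dist x y ^ σ} ∩ closedBall x s) := by rw [hν_compl, add_zero]
      _ ≤ ν (closedBall x (min (t ^ (1/σ)) s)) := measure_mono hsub
      _ ≤ ENNReal.ofReal ((min (t ^ (1/σ)) s) ^ κ) :=
          hν_ball _ hmin (min_le_right _ _)
  -- split the outer integral at s^σ
  have hsσ : 0 < s ^ σ := Real.rpow_pos_of_pos hs _
  have hsplit : (Ioi (0:ℝ)) = Ioc 0 (s ^ σ) ∪ Ioi (s ^ σ) :=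
    (Ioc_union_Ioi_eq_Ioi hsσ.le).symm
  calc ∫⁻ t in Ioi (0:ℝ), ν {y | t < dist x y ^ σ}
      ≤ ∫⁻ t in Ioi (0:ℝ), ENNReal.ofReal ((min (t ^ (1/σ)) s) ^ κ) := by
        refine setLIntegral_mono' measurableSet_Ioi fun t ht => hdistr t ht
    _ = (∫⁻ t in Ioc (0:ℝ) (s ^ σ), ENNReal.ofReal ((min (t ^ (1/σ)) s) ^ κ))
        + ∫⁻ t in Ioi (s ^ σ), ENNReal.ofReal ((min (t ^ (1/σ)) s) ^ κ) := by
        rw [hsplit, lintegral_union measurableSet_Ioi (Ioc_disjoint_Ioi le_rfl)]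
    _ ≤ ENNReal.ofReal (s ^ (κ + σ)) + ENNReal.ofReal (|σ| / (κ + σ) * s ^ (κ + σ)) := by
        gcongr
        · -- first piece: integrand ≤ s^κ
          calc ∫⁻ t in Ioc (0:ℝ) (s ^ σ), ENNReal.ofReal ((min (t ^ (1/σ)) s) ^ κ)
              ≤ ∫⁻ _ in Ioc (0:ℝ) (s ^ σ), ENNReal.ofReal (s ^ κ) := by
                refine setLIntegral_mono' measurableSet_Ioc fun t ht => ?_
                refine ENNReal.ofReal_le_ofReal ?_
                refine Real.rpow_le_rpow (le_min (Real.rpow_nonneg ?_ _) hs.le)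
                  (min_le_right _ _) hκ.le
                exact le_of_lt ht.1
            _ = ENNReal.ofReal (s ^ κ) * volume (Ioc (0:ℝ) (s ^ σ)) := by
                rw [setLIntegral_const]
            _ = ENNReal.ofReal (s ^ (κ + σ)) := by
                rw [Real.volume_Ioc, sub_zero,
                  ← ENNReal.ofReal_mul (Real.rpow_nonneg hs.le _),
                  ← Real.rpow_add hs]
        · -- second piece
          have hβ : κ / σ < -1 := by
            rw [div_lt_iff_of_neg hσ0]
            linarith
          calc ∫⁻ t in Ioi (s ^ σ), ENNReal.ofReal ((min (t ^ (1/σ)) s) ^ κ)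
              ≤ ∫⁻ t in Ioi (s ^ σ), ENNReal.ofReal (t ^ (κ / σ)) := by
                refine setLIntegral_mono' measurableSet_Ioi fun t ht => ?_
                have ht0 : (0:ℝ) < t := hsσ.trans ht
                refine ENNReal.ofReal_le_ofReal ?_
                have : (min (t ^ (1/σ)) s) ^ κ ≤ (t ^ (1/σ)) ^ κ :=
                  Real.rpow_le_rpow (le_min (Real.rpow_nonneg ht0.le _) hs.le)
                    (min_le_left _ _) hκ.le
                refine this.trans_eq ?_
                rw [← Real.rpow_mul ht0.le, one_div, inv_mul_eq_div]
            _ = ENNReal.ofReal (∫ t in Ioi (s ^ σ), t ^ (κ / σ)) := by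
                rw [ofReal_integral_eq_lintegral_ofReal
                  (integrableOn_Ioi_rpow_of_lt hβ hsσ)]
                filter_upwards [ae_restrict_mem measurableSet_Ioi] with t ht
                exact Real.rpow_nonneg (hsσ.trans ht).le _
            _ = ENNReal.ofReal (|σ| / (κ + σ) * s ^ (κ + σ)) := by
                rw [integral_Ioi_rpow_of_lt hβ hsσ]
                congr 1
                rw [← Real.rpow_mul hs.le]
                have h1 : σ * (κ / σ + 1) = κ + σ := by
                  rw [mul_comm, add_mul, div_mul_cancel₀ _ hσ0.ne, one_mul]
                have h2 : (κ + σ) / σ = κ / σ + 1 := by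
                  rw [add_div, div_self hσ0.ne]
                rw [h1, habs, ← h2, div_div_eq_mul_div]
                ring
    _ = ENNReal.ofReal ((1 + |σ| / (κ + σ)) * s ^ (κ + σ)) := by
        rw [← ENNReal.ofReal_add (Real.rpow_nonneg hs.le _)
          (by positivity)]
        congr 1
        ring
end

section
/- Let n ≥ 1 be an integer, ρ : ℝⁿ → [0,∞) integrable, r ∈ (0,1) and a > 0. Define E_r = { x ∈ ℝⁿ : Mρ(s,x) ≤ s^a for all s ∈ (0,r] }. Then E_r is closed, and its complement E_r^c = { x ∈ ℝⁿ : Mρ(s,x) > s^a for some s ∈ (0,r] } can be covered by countably many balls B(x_j, τ_j) with radii τ_j ≤ 5r satisfying Σ_j τ_j^a ≤ 5^a ∫_{ℝⁿ} ρ dx; in particular the a-order spherical Hausdorff premeasure of E_r^c at level 5r is at most 5^a ‖ρ‖_{L¹(ℝⁿ)}. -/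
open MeasureTheory Metric Set Filter Topology

/-- For integrable `ρ ≥ 0` on `ℝⁿ`, `r ∈ (0,1)` and `a > 0`, the set
`E_r = {x : Mρ(s,x) ≤ s^a for all s ∈ (0,r]}` is closed, and its complement can be covered
by countably many balls of radii `τ_j ≤ 5r` with `Σ_j τ_j^a ≤ 5^a ∫ ρ`. -/
theorem stmt8 (n : ℕ) (hn : 1 ≤ n) (ρ : EuclideanSpace ℝ (Fin n) → ℝ)
    (hmeas : Measurable ρ) (hρ : ∀ y, 0 ≤ ρ y) (hint : Integrable ρ)
    (r a : ℝ) (hr : r ∈ Set.Ioo (0 : ℝ) 1) (ha : 0 < a) :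
    IsClosed {x : EuclideanSpace ℝ (Fin n) |
        ∀ s : ℝ, 0 < s → s ≤ r → ∫ y in closedBall x s, ρ y ≤ s ^ a} ∧
      ∃ (c : ℕ → EuclideanSpace ℝ (Fin n)) (τ : ℕ → ℝ),
        (∀ j, 0 ≤ τ j ∧ τ j ≤ 5 * r) ∧
        {x : EuclideanSpace ℝ (Fin n) |
            ∀ s : ℝ, 0 < s → s ≤ r → ∫ y in closedBall x s, ρ y ≤ s ^ a}ᶜ ⊆
          (⋃ j, Metric.ball (c j) (τ j)) ∧
        Summable (fun j => τ j ^ a) ∧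
        ∑' j, τ j ^ a ≤ 5 ^ a * ∫ y, ρ y := by
  classical
  haveI : NeZero n := ⟨by omega⟩
  haveI : Nontrivial (EuclideanSpace ℝ (Fin n)) :=
    inferInstanceAs (Nontrivial (PiLp 2 fun _ : Fin n => ℝ))
  set E : Set (EuclideanSpace ℝ (Fin n)) :=
    {x : EuclideanSpace ℝ (Fin n) |
      ∀ s : ℝ, 0 < s → s ≤ r → ∫ y in closedBall x s, ρ y ≤ s ^ a} with hE
  constructor
  · -- closedness
    apply isClosed_of_closure_subset
    intro x hx s hs hsr
    have key : ∀ s' : ℝ, 0 ≤ s' → s' < s → ∫ y in closedBall x s', ρ y ≤ s ^ a := by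
      intro s' hs0 hs's
      obtain ⟨y, hyE, hyx⟩ := Metric.mem_closure_iff.1 hx (s - s') (by linarith)
      have hsub : closedBall x s' ⊆ closedBall y s := by
        intro z hz
        simp only [mem_closedBall] at hz ⊢
        have h1 : dist z y ≤ dist z x + dist x y := dist_triangle z x y
        linarith
      calc ∫ z in closedBall x s', ρ z ≤ ∫ z in closedBall y s, ρ z :=
            setIntegral_mono_set hint.integrableOn (ae_of_all _ hρ)
              (HasSubset.Subset.eventuallyLE hsub)
        _ ≤ s ^ a := hyE s hs hsr
    set F : ℕ → Set (EuclideanSpace ℝ (Fin n)) := fun k => closedBall x (s - s / (k + 1)) with hF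
    have hFm : Monotone F := by
      intro i j hij
      apply closedBall_subset_closedBall
      have h1 : (0:ℝ) < i + 1 := by positivity
      have h2 : (i:ℝ) + 1 ≤ (j:ℝ) + 1 := by exact_mod_cast by omega
      have : s / ((j:ℝ) + 1) ≤ s / ((i:ℝ) + 1) :=
        div_le_div_of_nonneg_left hs.le h1 h2
      push_cast
      linarith
    have hFu : ⋃ k, F k = ball x s := by
      ext z
      simp only [hF, mem_iUnion, mem_closedBall, mem_ball]
      constructor
      · rintro ⟨k, hk⟩
        have : (0:ℝ) < s / (k + 1) := by positivity
        linarith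
      · intro hz
        have hd : 0 < s - dist z x := by linarith
        obtain ⟨k, hk⟩ := exists_nat_gt (s / (s - dist z x))
        refine ⟨k, ?_⟩
        have hk1 : s / (s - dist z x) < (k:ℝ) + 1 := by linarith
        have h2 : s < ((k:ℝ) + 1) * (s - dist z x) := (div_lt_iff₀ hd).1 hk1
        have h3 : s / ((k:ℝ) + 1) < s - dist z x := by
          rw [div_lt_iff₀ (by positivity)]
          nlinarith
        push_cast
        linarith
    have hlim := tendsto_setIntegral_of_monotone (μ := volume) (f := ρ)
      (fun k => measurableSet_closedBall) hFm (by rw [hFu]; exact hint.integrableOn)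
    rw [hFu] at hlim
    have hball : ∫ y in ball x s, ρ y ≤ s ^ a := by
      refine le_of_tendsto' hlim fun k => key _ ?_ ?_
      · have h1 : s / ((k:ℝ) + 1) ≤ s / 1 :=
          div_le_div_of_nonneg_left hs.le one_pos (by exact_mod_cast by omega)
        simp only [div_one] at h1
        push_cast
        linarith
      · have : (0:ℝ) < s / ((k:ℝ) + 1) := by positivity
        push_cast
        linarith
    have hsph : volume (sphere x s) = 0 := Measure.addHaar_sphere (μ := volume) x s
    have hae : closedBall x s =ᵐ[volume] ball x s := by
      rw [← ball_union_sphere]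
      exact union_ae_eq_left_iff_ae_subset.mpr
        (ae_le_set.mpr (measure_mono_null diff_subset hsph))
    calc ∫ y in closedBall x s, ρ y = ∫ y in ball x s, ρ y := setIntegral_congr_set hae
      _ ≤ s ^ a := hball
  · -- covering
    have hwit : ∀ x, x ∈ Eᶜ → ∃ t : ℝ, (0 < t ∧ t ≤ r) ∧ t ^ a < ∫ y in closedBall x t, ρ y := by
      intro x hx
      simp only [hE, mem_compl_iff, mem_setOf_eq, not_forall] at hx
      obtain ⟨t, h1, h2, h3⟩ := hx
      exact ⟨t, ⟨h1, h2⟩, lt_of_not_ge h3⟩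
    choose! s hs01 hsint using hwit
    have hspos : ∀ x ∈ Eᶜ, 0 < s x := fun x hx => (hs01 x hx).1
    have hsler : ∀ x ∈ Eᶜ, s x ≤ r := fun x hx => (hs01 x hx).2
    obtain ⟨u, hut, hdisj, hcov⟩ :=
      Vitali.exists_disjoint_subfamily_covering_enlargement
        (fun x : EuclideanSpace ℝ (Fin n) => closedBall x (s x)) Eᶜ s 2 one_lt_two
        (fun x hx => (hspos x hx).le) r hsler
        (fun x hx => ⟨x, mem_closedBall_self (hspos x hx).le⟩)
    -- the density measure
    set ν : Measure (EuclideanSpace ℝ (Fin n)) := volume.withDensity (fun y => ENNReal.ofReal (ρ y)) with hν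
    haveI : IsFiniteMeasure ν := by
      constructor
      rw [hν, withDensity_apply _ MeasurableSet.univ, Measure.restrict_univ]
      calc ∫⁻ y, ENNReal.ofReal (ρ y) ≤ ∫⁻ y, (‖ρ y‖₊ : ENNReal) :=
            lintegral_mono fun y => Real.ofReal_le_enorm (ρ y)
        _ < ⊤ := hint.2
    have hνint : ∀ x ∈ Eᶜ, ∫ y in closedBall x (s x), ρ y = (ν (closedBall x (s x))).toReal := by
      intro x hx
      rw [integral_eq_lintegral_of_nonneg_ae (ae_of_all _ hρ) hmeas.aestronglyMeasurable.restrict]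
      congr 1
      rw [hν, withDensity_apply _ measurableSet_closedBall]
    have hνpos : ∀ x ∈ Eᶜ, 0 < ν (closedBall x (s x)) := by
      intro x hx
      rcases eq_zero_or_pos (ν (closedBall x (s x))) with h0 | h
      · exfalso
        have h1 := hsint x hx
        rw [hνint x hx, h0] at h1
        simp only [ENNReal.toReal_zero] at h1
        exact absurd h1 (not_lt.2 (Real.rpow_nonneg (hspos x hx).le a))
      · exact h
    have hu_cnt : u.Countable := by
      have hc := Measure.countable_meas_pos_of_disjoint_iUnion (μ := ν)
        (As := fun b : ↥u => closedBall (b : EuclideanSpace ℝ (Fin n)) (s (b : EuclideanSpace ℝ (Fin n))))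
        (fun b => measurableSet_closedBall)
        (fun i j hij => hdisj i.2 j.2 (fun h => hij (Subtype.ext h)))
      have huniv : {i : ↥u | 0 < ν (closedBall (i : EuclideanSpace ℝ (Fin n)) (s (i : EuclideanSpace ℝ (Fin n))))} = Set.univ :=
        eq_univ_of_forall fun b => hνpos (b : EuclideanSpace ℝ (Fin n)) (hut b.2)
      rw [huniv] at hc
      exact Set.countable_coe_iff.mp (Set.countable_univ_iff.mp hc)
    obtain ⟨f, hf⟩ := Set.countable_iff_exists_injective.1 hu_cnt
    set pinv : ℕ → Option ↥u := Function.partialInv f with hpinvdef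
    have hpinv : ∀ j b, pinv j = some b → f b = j := by
      intro j b hb
      simp only [hpinvdef, Function.partialInv] at hb
      split_ifs at hb with h
      · obtain rfl : Classical.choose h = b := Option.some.inj hb
        exact Classical.choose_spec h
    set c : ℕ → EuclideanSpace ℝ (Fin n) := fun j => (pinv j).elim 0 (fun b => (b : EuclideanSpace ℝ (Fin n))) with hc
    set τ : ℕ → ℝ := fun j => (pinv j).elim 0 (fun b => 5 * s (b : EuclideanSpace ℝ (Fin n))) with hτ
    set A : ℕ → Set (EuclideanSpace ℝ (Fin n)) := fun j => (pinv j).elim ∅ (fun b => closedBall (b : EuclideanSpace ℝ (Fin n)) (s (b : EuclideanSpace ℝ (Fin n))))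
      with hA
    have hspos' : ∀ b : ↥u, 0 < s (b : EuclideanSpace ℝ (Fin n)) := fun b => hspos _ (hut b.2)
    have hτ0 : ∀ j, 0 ≤ τ j := by
      intro j
      rcases hj : pinv j with _ | b
      · simp [hτ, hj]
      · simp only [hτ, hj, Option.elim]
        linarith [hspos' b]
    have h5a : (0:ℝ) ≤ 5 ^ a := Real.rpow_nonneg (by norm_num) a
    have hterm : ∀ j, τ j ^ a ≤ 5 ^ a * ∫ y in A j, ρ y := by
      intro j
      rcases hj : pinv j with _ | b
      · simp only [hτ, hA, hj, Option.elim]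
        rw [Real.zero_rpow ha.ne']
        simp
      · simp only [hτ, hA, hj, Option.elim]
        rw [Real.mul_rpow (by norm_num) (hspos' b).le]
        exact mul_le_mul_of_nonneg_left (hsint (b : EuclideanSpace ℝ (Fin n)) (hut b.2)).le h5a
    have hAmeas : ∀ j, MeasurableSet (A j) := by
      intro j
      rcases hj : pinv j with _ | b
      · simp [hA, hj]
      · simp only [hA, hj, Option.elim]
        exact measurableSet_closedBall
    have hAdisj : ∀ i j : ℕ, i ≠ j → Disjoint (A i) (A j) := by
      intro i j hij
      rcases hi : pinv i with _ | b
      · simp [hA, hi]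
      · rcases hj : pinv j with _ | b'
        · simp [hA, hj]
        · have hbb' : b ≠ b' := by
            rintro rfl
            exact hij ((hpinv i b hi).symm.trans (hpinv j b hj))
          simp only [hA, hi, hj, Option.elim]
          exact hdisj b.2 b'.2 (fun h => hbb' (Subtype.ext h))
    have hsum_range : ∀ N : ℕ, ∑ j ∈ Finset.range N, τ j ^ a ≤ 5 ^ a * ∫ y, ρ y := by
      intro N
      calc ∑ j ∈ Finset.range N, τ j ^ a
          ≤ ∑ j ∈ Finset.range N, 5 ^ a * ∫ y in A j, ρ y :=
            Finset.sum_le_sum fun j _ => hterm j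
        _ = 5 ^ a * ∑ j ∈ Finset.range N, ∫ y in A j, ρ y := by rw [Finset.mul_sum]
        _ = 5 ^ a * ∫ y in ⋃ j ∈ Finset.range N, A j, ρ y := by
            rw [integral_biUnion_finset _ (fun j _ => hAmeas j)
              (fun i _ j _ hij => hAdisj i j hij) (fun j _ => hint.integrableOn)]
        _ ≤ 5 ^ a * ∫ y, ρ y :=
            mul_le_mul_of_nonneg_left (setIntegral_le_integral hint (ae_of_all _ hρ)) h5a
    refine ⟨c, τ, ?_, ?_, ?_, ?_⟩
    · intro j
      rcases hj : pinv j with _ | b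
      · simp only [hτ, hj, Option.elim]
        exact ⟨le_refl 0, by linarith [hr.1]⟩
      · simp only [hτ, hj, Option.elim]
        have h1 := hspos' b
        have h2 := hsler (b : EuclideanSpace ℝ (Fin n)) (hut b.2)
        exact ⟨by linarith, by linarith⟩
    · intro x hx
      obtain ⟨b, hbu, ⟨z, hz1, hz2⟩, hle⟩ := hcov x hx
      have hpj : pinv (f ⟨b, hbu⟩) = some ⟨b, hbu⟩ := Function.partialInv_left hf _
      refine mem_iUnion.2 ⟨f ⟨b, hbu⟩, ?_⟩
      simp only [mem_ball, hc, hτ, hpj, Option.elim]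
      have hsb : 0 < s b := hspos b (hut hbu)
      have hd1 : dist x b ≤ dist x z + dist z b := dist_triangle x z b
      simp only [mem_closedBall] at hz1 hz2
      have hdxz : dist x z ≤ s x := by rw [dist_comm]; exact hz1
      calc dist x b ≤ s x + s b := by linarith
        _ ≤ 2 * s b + s b := by linarith
        _ < 5 * s b := by linarith
    · exact summable_of_sum_range_le (fun j => Real.rpow_nonneg (hτ0 j) a) hsum_range
    · exact Real.tsum_le_of_sum_range_le (fun j => Real.rpow_nonneg (hτ0 j) a) hsum_range
end

section
/- Let n ∈ {2,3}, γ ∈ [1, n/2], γ(n) = (n(n-1) - nγ)/(n-γ), and α > 0 with γ(n) - n + 1 + α < 0. Let ρ : ℝⁿ → [0,∞) be measurable and x ∈ ℝⁿ be such that Mρ(s,x) ≤ s^{γ(n)+α} for every s > 0 and such that 0 < M₀ρ(x) < ∞, where M₀ρ(x) = sup_{r>0} r^{-n} ∫_{B_r(x)} ρ(y) dy. Then ∫_{ℝⁿ} |x-y|^{1-n} ρ(y) dy ≤ C(n,γ,α) (M₀ρ(x))^{(γ(n)-n+1+α)/(γ(n)-n+α)} for a constant C(n,γ,α) independent of ρ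 and x. -/
open MeasureTheory Metric Set Filter Topology ENNReal

/-- The exponent `γ(n) = (n(n-1) - nγ)/(n-γ)` from the paper. -/
noncomputable def gammaSmall (n : ℕ) (γ : ℝ) : ℝ :=
  ((n : ℝ) * ((n : ℝ) - 1) - (n : ℝ) * γ) / ((n : ℝ) - γ)

private lemma pow_rpow_comm {x : ℝ} (hx : 0 ≤ x) (j : ℕ) (t : ℝ) :
    (x ^ j) ^ t = (x ^ t) ^ j := by
  rw [← Real.rpow_natCast x j, ← Real.rpow_mul hx, mul_comm ((j : ℕ) : ℝ) t,
    Real.rpow_mul hx, Real.rpow_natCast]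

private lemma ring_term_eq (s c t u : ℝ) (hs : 0 < s) (hc : 0 < c) (k : ℕ) :
    (s * c ^ (k + 1)) ^ t * (s * c ^ k) ^ u
      = (s ^ (t + u) * c ^ t) * ((c ^ (t + u)) ^ k) := by
  rw [Real.mul_rpow hs.le (pow_nonneg hc.le _), Real.mul_rpow hs.le (pow_nonneg hc.le _),
    pow_rpow_comm hc.le, pow_rpow_comm hc.le, Real.rpow_add hs, Real.rpow_add hc, mul_pow,
    pow_succ]
  ring

private lemma geom_sum_ofReal {c r : ℝ} (hc : 0 ≤ c) (hr : 0 ≤ r) :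
    ∑' k : ℕ, ENNReal.ofReal (c * r ^ k)
      = ENNReal.ofReal c * (1 - ENNReal.ofReal r)⁻¹ := by
  simp_rw [ENNReal.ofReal_mul hc, ENNReal.ofReal_pow hr, ENNReal.tsum_mul_left,
    ENNReal.tsum_geometric]

private lemma inv_one_sub_facts {q : ℝ} (hq1 : q < 1) :
    ((1 : ℝ≥0∞) - ENNReal.ofReal q)⁻¹ ≠ ⊤ ∧
      0 < (((1 : ℝ≥0∞) - ENNReal.ofReal q)⁻¹).toReal := by
  have h1 : ENNReal.ofReal q < 1 := ENNReal.ofReal_lt_one.mpr hq1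
  have h2 : (0 : ℝ≥0∞) < 1 - ENNReal.ofReal q := tsub_pos_of_lt h1
  have h3 : (1 : ℝ≥0∞) - ENNReal.ofReal q ≠ ⊤ :=
    (tsub_le_self.trans_lt ENNReal.one_lt_top).ne
  have h4 : ((1 : ℝ≥0∞) - ENNReal.ofReal q)⁻¹ ≠ ⊤ := ENNReal.inv_ne_top.mpr h2.ne'
  exact ⟨h4, ENNReal.toReal_pos (ENNReal.inv_ne_zero.mpr h3) h4⟩

private lemma annulus_bound {n : ℕ} (hn : 2 ≤ n) {ρ : EuclideanSpace ℝ (Fin n) → ℝ}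
    (hρ : ∀ y, 0 ≤ ρ y) (x : EuclideanSpace ℝ (Fin n)) {a b : ℝ} (ha : 0 < a)
    (hint : IntegrableOn ρ (closedBall x b)) :
    ∫⁻ y in closedBall x b \ closedBall x a,
        ENNReal.ofReal (dist x y ^ (1 - (n : ℝ)) * ρ y)
      ≤ ENNReal.ofReal (a ^ (1 - (n : ℝ)) * ∫ y in closedBall x b, ρ y) := by
  have hnR : (2 : ℝ) ≤ (n : ℝ) := by exact_mod_cast hn
  have hmeas : MeasurableSet (closedBall x b \ closedBall x a) :=
    measurableSet_closedBall.diff measurableSet_closedBall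
  calc ∫⁻ y in closedBall x b \ closedBall x a,
        ENNReal.ofReal (dist x y ^ (1 - (n : ℝ)) * ρ y)
      ≤ ∫⁻ y in closedBall x b \ closedBall x a,
          ENNReal.ofReal (a ^ (1 - (n : ℝ)) * ρ y) := by
        refine setLIntegral_mono' hmeas fun y hy => ?_
        refine ENNReal.ofReal_le_ofReal (mul_le_mul_of_nonneg_right ?_ (hρ y))
        have hd : a ≤ dist x y := by
          have h := hy.2
          rw [mem_closedBall, dist_comm] at h
          push_neg at h
          exact h.le
        exact Real.rpow_le_rpow_of_nonpos ha hd (by linarith)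
    _ ≤ ∫⁻ y in closedBall x b, ENNReal.ofReal (a ^ (1 - (n : ℝ)) * ρ y) :=
        lintegral_mono_set diff_subset
    _ = ENNReal.ofReal (∫ y in closedBall x b, a ^ (1 - (n : ℝ)) * ρ y) :=
        (ofReal_integral_eq_lintegral_ofReal (hint.const_mul _)
          (ae_of_all _ fun y => mul_nonneg (Real.rpow_nonneg ha.le _) (hρ y))).symm
    _ = ENNReal.ofReal (a ^ (1 - (n : ℝ)) * ∫ y in closedBall x b, ρ y) := by
        rw [integral_const_mul]

private lemma rho_integrableOn {n : ℕ} (hn : 2 ≤ n) {ρ : EuclideanSpace ℝ (Fin n) → ℝ}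
    (hρm : Measurable ρ) (hρ : ∀ y, 0 ≤ ρ y) {x : EuclideanSpace ℝ (Fin n)}
    (h0 : volume ({x} : Set (EuclideanSpace ℝ (Fin n))) = 0)
    (hf : Integrable (fun y => dist x y ^ (1 - (n : ℝ)) * ρ y)) (r : ℝ) :
    IntegrableOn ρ (closedBall x r) := by
  have hnR : (2 : ℝ) ≤ (n : ℝ) := by exact_mod_cast hn
  refine Integrable.mono' ((hf.integrableOn).const_mul (r ^ ((n : ℝ) - 1)))
    hρm.aestronglyMeasurable.restrict ?_
  have h1 : ∀ᵐ y ∂(volume : Measure (EuclideanSpace ℝ (Fin n))), y ≠ x := by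
    rw [ae_iff]
    simpa using h0
  filter_upwards [ae_restrict_of_ae h1, ae_restrict_mem measurableSet_closedBall] with y hyx hymem
  have hd : 0 < dist x y := dist_pos.mpr (Ne.symm hyx)
  have hdr : dist x y ≤ r := by
    rw [dist_comm]
    exact mem_closedBall.mp hymem
  have key : ρ y = dist x y ^ ((n : ℝ) - 1) * (dist x y ^ (1 - (n : ℝ)) * ρ y) := by
    rw [← mul_assoc, ← Real.rpow_add hd,
      show (n : ℝ) - 1 + (1 - (n : ℝ)) = 0 from by ring, Real.rpow_zero, one_mul]
  calc ‖ρ y‖ = dist x y ^ ((n : ℝ) - 1) * (dist x y ^ (1 - (n : ℝ)) * ρ y) := by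
        rw [Real.norm_of_nonneg (hρ y)]; exact key
    _ ≤ r ^ ((n : ℝ) - 1) * (dist x y ^ (1 - (n : ℝ)) * ρ y) :=
        mul_le_mul_of_nonneg_right (Real.rpow_le_rpow hd.le hdr (by linarith))
          (mul_nonneg (Real.rpow_nonneg dist_nonneg _) (hρ y))

set_option maxHeartbeats 2000000 in
/-- For `n ∈ {2,3}`, `γ ∈ [1,n/2]` and `α > 0` with
`γ(n) - n + 1 + α < 0`, there is `C = C(n,γ,α)` such that: if `ρ ≥ 0` is measurable,
`Mρ(s,x) ≤ s^{γ(n)+α}` for all `s > 0`, and the maximal function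
`M₀ρ(x) = sup_{r>0} r^{-n} ∫_{B_r(x)} ρ` is positive and finite, then
`∫ |x-y|^{1-n} ρ(y) dy ≤ C (M₀ρ(x))^{(γ(n)-n+1+α)/(γ(n)-n+α)}`. -/
theorem stmt9 (n : ℕ) (hn : n = 2 ∨ n = 3) (γ α : ℝ)
    (hγ : γ ∈ Set.Icc (1 : ℝ) ((n : ℝ) / 2)) (hα : 0 < α)
    (hcond : gammaSmall n γ - n + 1 + α < 0) :
    ∃ C : ℝ, 0 < C ∧
      ∀ ρ : EuclideanSpace ℝ (Fin n) → ℝ, Measurable ρ → (∀ y, 0 ≤ ρ y) →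
        ∀ x : EuclideanSpace ℝ (Fin n),
          (∀ s : ℝ, 0 < s →
            ∫ y in closedBall x s, ρ y ≤ s ^ (gammaSmall n γ + α)) →
          let M₀ : ℝ≥0∞ := ⨆ (r : ℝ) (_ : 0 < r),
            ENNReal.ofReal (r ^ (-(n : ℝ)) * ∫ y in closedBall x r, ρ y)
          0 < M₀ → M₀ ≠ ⊤ →
          ∫ y, dist x y ^ (1 - (n : ℝ)) * ρ y ≤
            C * M₀.toReal ^
              ((gammaSmall n γ - n + 1 + α) / (gammaSmall n γ - n + α)) := by
  classical
  have hn2 : 2 ≤ n := by rcases hn with rfl | rfl <;> norm_num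
  have hnR : (2 : ℝ) ≤ (n : ℝ) := by exact_mod_cast hn2
  set β : ℝ := gammaSmall n γ + α with hβdef
  have hb1 : β + 1 - (n : ℝ) < 0 := by
    have : gammaSmall n γ - (n : ℝ) + 1 + α < 0 := hcond
    rw [hβdef]; linarith
  have hbn : β - (n : ℝ) < 0 := by linarith
  have hbn0 : β - (n : ℝ) ≠ 0 := hbn.ne
  -- ratio for the far geometric series
  have hq1 : (2 : ℝ) ^ (β + 1 - (n : ℝ)) < 1 :=
    Real.rpow_lt_one_of_one_lt_of_neg (by norm_num) hb1
  have hq0 : (0 : ℝ) < (2 : ℝ) ^ (β + 1 - (n : ℝ)) := Real.rpow_pos_of_pos (by norm_num) _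
  -- the constants
  obtain ⟨hc₁top, hc₁pos⟩ := inv_one_sub_facts (q := (2 : ℝ)⁻¹) (by norm_num)
  obtain ⟨hc₂top, hc₂pos⟩ := inv_one_sub_facts hq1
  set c₁ : ℝ := (((1 : ℝ≥0∞) - ENNReal.ofReal ((2 : ℝ)⁻¹))⁻¹).toReal with hc₁def
  set c₂ : ℝ :=
    (((1 : ℝ≥0∞) - ENNReal.ofReal ((2 : ℝ) ^ (β + 1 - (n : ℝ))))⁻¹).toReal with hc₂def
  have hc₁eq : ((1 : ℝ≥0∞) - ENNReal.ofReal ((2 : ℝ)⁻¹))⁻¹ = ENNReal.ofReal c₁ :=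
    (ENNReal.ofReal_toReal hc₁top).symm
  have hc₂eq : ((1 : ℝ≥0∞) - ENNReal.ofReal ((2 : ℝ) ^ (β + 1 - (n : ℝ))))⁻¹
      = ENNReal.ofReal c₂ := (ENNReal.ofReal_toReal hc₂top).symm
  refine ⟨2 ^ ((n : ℝ) - 1) * c₁ + 2 ^ β * c₂, ?_, ?_⟩
  · have h1 : (0 : ℝ) < 2 ^ ((n : ℝ) - 1) * c₁ :=
      mul_pos (Real.rpow_pos_of_pos (by norm_num) _) hc₁pos
    have h2 : (0 : ℝ) < 2 ^ β * c₂ :=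
      mul_pos (Real.rpow_pos_of_pos (by norm_num) _) hc₂pos
    linarith
  intro ρ hρm hρ x hMs M₀ hpos htop
  -- hMs already in terms of β
  have hM : 0 < M₀.toReal := ENNReal.toReal_pos hpos.ne' htop
  -- rewrite the exponent in the goal
  have hnum : gammaSmall n γ - (n : ℝ) + 1 + α = β + 1 - (n : ℝ) := by rw [hβdef]; ring
  have hden : gammaSmall n γ - (n : ℝ) + α = β - (n : ℝ) := by rw [hβdef]; ring
  rw [hnum, hden]
  set e : ℝ := (β + 1 - (n : ℝ)) / (β - (n : ℝ)) with hedef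
  set M : ℝ := M₀.toReal with hMdef
  have hMe : (0 : ℝ) ≤ M ^ e := Real.rpow_nonneg hM.le _
  -- the maximal-function bound on balls
  have hMb : ∀ r : ℝ, 0 < r → ∫ y in closedBall x r, ρ y ≤ M * r ^ ((n : ℝ)) := by
    intro r hr
    have h1 : ENNReal.ofReal (r ^ (-(n : ℝ)) * ∫ y in closedBall x r, ρ y) ≤ M₀ :=
      le_iSup₂ (f := fun (r : ℝ) (_ : 0 < r) =>
        ENNReal.ofReal (r ^ (-(n : ℝ)) * ∫ y in closedBall x r, ρ y)) r hr
    have h2 := (ENNReal.ofReal_le_iff_le_toReal htop).1 h1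
    have hrn : (0 : ℝ) < r ^ ((n : ℝ)) := Real.rpow_pos_of_pos hr _
    rw [Real.rpow_neg hr.le] at h2
    rw [inv_mul_le_iff₀ hrn] at h2
    calc ∫ y in closedBall x r, ρ y ≤ r ^ ((n : ℝ)) * M := h2
      _ = M * r ^ ((n : ℝ)) := mul_comm _ _
  by_cases hf : Integrable (fun y => dist x y ^ (1 - (n : ℝ)) * ρ y) (volume)
  swap
  · rw [integral_undef hf]
    have hC : (0 : ℝ) < 2 ^ ((n : ℝ) - 1) * c₁ + 2 ^ β * c₂ := by
      have h1 : (0 : ℝ) < 2 ^ ((n : ℝ) - 1) * c₁ :=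
        mul_pos (Real.rpow_pos_of_pos (by norm_num) _) hc₁pos
      have h2 : (0 : ℝ) < 2 ^ β * c₂ :=
        mul_pos (Real.rpow_pos_of_pos (by norm_num) _) hc₂pos
      linarith
    exact mul_nonneg hC.le hMe
  -- the singleton has measure zero
  have h0 : volume ({x} : Set (EuclideanSpace ℝ (Fin n))) = 0 := by
    rcases hn with rfl | rfl <;> exact measure_singleton x
  have hIntOn : ∀ r : ℝ, IntegrableOn ρ (closedBall x r) :=
    rho_integrableOn hn2 hρm hρ h0 hf
  -- the crossover radius
  set s₀ : ℝ := M ^ ((β - (n : ℝ))⁻¹) with hs₀def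
  have hs₀ : 0 < s₀ := Real.rpow_pos_of_pos hM _
  -- key identities
  have hK1 : M * s₀ = M ^ e := by
    rw [hs₀def]
    nth_rewrite 1 [← Real.rpow_one M]
    rw [← Real.rpow_add hM, hedef]
    congr 1
    field_simp
    ring
  have hK2 : s₀ ^ (β + 1 - (n : ℝ)) = M ^ e := by
    rw [hs₀def, ← Real.rpow_mul hM.le, hedef]
    congr 1
    field_simp
  -- the annuli
  set ringN : ℕ → Set (EuclideanSpace ℝ (Fin n)) := fun k =>
    closedBall x (s₀ * (2⁻¹ : ℝ) ^ k) \ closedBall x (s₀ * (2⁻¹ : ℝ) ^ (k + 1)) with hringN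
  set ringF : ℕ → Set (EuclideanSpace ℝ (Fin n)) := fun k =>
    closedBall x (s₀ * (2 : ℝ) ^ (k + 1)) \ closedBall x (s₀ * (2 : ℝ) ^ k) with hringF
  -- coverage
  have hcover : (({x} : Set (EuclideanSpace ℝ (Fin n)))ᶜ : Set _) ⊆
      (⋃ k : ℕ, ringN k) ∪ ⋃ k : ℕ, ringF k := by
    intro y hy
    have hyx : y ≠ x := hy
    have hd : 0 < dist x y := dist_pos.mpr (Ne.symm hyx)
    rcases le_or_gt (dist x y) s₀ with hle | hlt
    · left
      have hex : ∃ m : ℕ, s₀ * (2⁻¹ : ℝ) ^ (m + 1) < dist x y := by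
        obtain ⟨m, hm⟩ := exists_pow_lt_of_lt_one (div_pos hd hs₀)
          (by norm_num : (2⁻¹ : ℝ) < 1)
        refine ⟨m, ?_⟩
        have h1 : (2⁻¹ : ℝ) ^ m * s₀ < dist x y := (lt_div_iff₀ hs₀).1 hm
        have h2 : (2⁻¹ : ℝ) ^ (m + 1) ≤ (2⁻¹ : ℝ) ^ m :=
          pow_le_pow_of_le_one (by norm_num) (by norm_num) (Nat.le_succ m)
        nlinarith
      refine mem_iUnion.2 ⟨Nat.find hex, ?_⟩
      have hk1 : s₀ * (2⁻¹ : ℝ) ^ (Nat.find hex + 1) < dist x y := Nat.find_spec hex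
      have hk2 : dist x y ≤ s₀ * (2⁻¹ : ℝ) ^ (Nat.find hex) := by
        rcases Nat.eq_zero_or_pos (Nat.find hex) with h | h
        · rw [h]; simpa using hle
        · have hmin := Nat.find_min hex (Nat.sub_lt h one_pos)
          push_neg at hmin
          have heq : Nat.find hex - 1 + 1 = Nat.find hex := by omega
          rwa [heq] at hmin
      simp only [hringN, mem_diff, mem_closedBall]
      rw [dist_comm]
      exact ⟨hk2, not_le.2 hk1⟩
    · right
      have hex : ∃ m : ℕ, dist x y ≤ s₀ * (2 : ℝ) ^ (m + 1) := by
        obtain ⟨m, hm⟩ := pow_unbounded_of_one_lt (dist x y / s₀) (by norm_num : (1 : ℝ) < 2)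
        refine ⟨m, ?_⟩
        have h1 : dist x y < (2 : ℝ) ^ m * s₀ := by
          rw [div_lt_iff₀ hs₀] at hm; linarith
        have h2 : (2 : ℝ) ^ m ≤ (2 : ℝ) ^ (m + 1) :=
          pow_le_pow_right₀ (by norm_num) (Nat.le_succ m)
        nlinarith
      refine mem_iUnion.2 ⟨Nat.find hex, ?_⟩
      have hk1 : dist x y ≤ s₀ * (2 : ℝ) ^ (Nat.find hex + 1) := Nat.find_spec hex
      have hk2 : s₀ * (2 : ℝ) ^ (Nat.find hex) < dist x y := by
        rcases Nat.eq_zero_or_pos (Nat.find hex) with h | h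
        · rw [h]; simpa using hlt
        · have hmin := Nat.find_min hex (Nat.sub_lt h one_pos)
          push_neg at hmin
          have heq : Nat.find hex - 1 + 1 = Nat.find hex := by omega
          rwa [heq] at hmin
      simp only [hringF, mem_diff, mem_closedBall]
      rw [dist_comm]
      exact ⟨hk1, not_le.2 hk2⟩
  -- per-annulus bounds
  have h2inv : ((2 : ℝ)⁻¹) ^ (1 - (n : ℝ)) = (2 : ℝ) ^ ((n : ℝ) - 1) := by
    rw [Real.inv_rpow (by norm_num : (0 : ℝ) ≤ 2),
      ← Real.rpow_neg (by norm_num : (0 : ℝ) ≤ 2)]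
    congr 1
    ring
  have hnear : ∀ k : ℕ, ∫⁻ y in ringN k, ENNReal.ofReal (dist x y ^ (1 - (n : ℝ)) * ρ y)
      ≤ ENNReal.ofReal ((M * (s₀ * 2 ^ ((n : ℝ) - 1))) * (2⁻¹ : ℝ) ^ k) := by
    intro k
    have hbpos : 0 < s₀ * (2⁻¹ : ℝ) ^ k := by positivity
    have hapos : 0 < s₀ * (2⁻¹ : ℝ) ^ (k + 1) := by positivity
    refine le_trans (annulus_bound hn2 hρ x hapos (hIntOn _)) (ENNReal.ofReal_le_ofReal ?_)
    have h1 : (s₀ * (2⁻¹ : ℝ) ^ (k + 1)) ^ (1 - (n : ℝ)) * ∫ y in closedBall x (s₀ * (2⁻¹ : ℝ) ^ k), ρ y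
        ≤ (s₀ * (2⁻¹ : ℝ) ^ (k + 1)) ^ (1 - (n : ℝ)) * (M * (s₀ * (2⁻¹ : ℝ) ^ k) ^ ((n : ℝ))) :=
      mul_le_mul_of_nonneg_left (hMb _ hbpos) (Real.rpow_nonneg hapos.le _)
    refine h1.trans (le_of_eq ?_)
    have h2 := ring_term_eq s₀ (2⁻¹ : ℝ) (1 - (n : ℝ)) ((n : ℝ)) hs₀ (by norm_num) k
    calc (s₀ * (2⁻¹ : ℝ) ^ (k + 1)) ^ (1 - (n : ℝ)) * (M * (s₀ * (2⁻¹ : ℝ) ^ k) ^ ((n : ℝ)))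
        = M * ((s₀ * (2⁻¹ : ℝ) ^ (k + 1)) ^ (1 - (n : ℝ)) * (s₀ * (2⁻¹ : ℝ) ^ k) ^ ((n : ℝ))) := by
          ring
      _ = M * ((s₀ ^ ((1 - (n : ℝ)) + (n : ℝ)) * (2⁻¹ : ℝ) ^ (1 - (n : ℝ)))
            * (((2⁻¹ : ℝ) ^ ((1 - (n : ℝ)) + (n : ℝ))) ^ k)) := by rw [h2]
      _ = (M * (s₀ * 2 ^ ((n : ℝ) - 1))) * (2⁻¹ : ℝ) ^ k := by
          rw [show (1 - (n : ℝ)) + (n : ℝ) = 1 from by ring, Real.rpow_one, Real.rpow_one,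
            h2inv]
          ring
  have hfar : ∀ k : ℕ, ∫⁻ y in ringF k, ENNReal.ofReal (dist x y ^ (1 - (n : ℝ)) * ρ y)
      ≤ ENNReal.ofReal ((s₀ ^ (β + 1 - (n : ℝ)) * 2 ^ β) * ((2 : ℝ) ^ (β + 1 - (n : ℝ))) ^ k) := by
    intro k
    have hbpos : 0 < s₀ * (2 : ℝ) ^ (k + 1) := by positivity
    have hapos : 0 < s₀ * (2 : ℝ) ^ k := by positivity
    refine le_trans (annulus_bound hn2 hρ x hapos (hIntOn _)) (ENNReal.ofReal_le_ofReal ?_)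
    have h1 : (s₀ * (2 : ℝ) ^ k) ^ (1 - (n : ℝ)) * ∫ y in closedBall x (s₀ * (2 : ℝ) ^ (k + 1)), ρ y
        ≤ (s₀ * (2 : ℝ) ^ k) ^ (1 - (n : ℝ)) * (s₀ * (2 : ℝ) ^ (k + 1)) ^ β :=
      mul_le_mul_of_nonneg_left (hMs _ hbpos) (Real.rpow_nonneg hapos.le _)
    refine h1.trans (le_of_eq ?_)
    have h2 := ring_term_eq s₀ (2 : ℝ) β (1 - (n : ℝ)) hs₀ (by norm_num) k
    calc (s₀ * (2 : ℝ) ^ k) ^ (1 - (n : ℝ)) * (s₀ * (2 : ℝ) ^ (k + 1)) ^ β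
        = (s₀ * (2 : ℝ) ^ (k + 1)) ^ β * (s₀ * (2 : ℝ) ^ k) ^ (1 - (n : ℝ)) := by ring
      _ = (s₀ ^ (β + (1 - (n : ℝ))) * (2 : ℝ) ^ β) * (((2 : ℝ) ^ (β + (1 - (n : ℝ)))) ^ k) := h2
      _ = (s₀ ^ (β + 1 - (n : ℝ)) * 2 ^ β) * ((2 : ℝ) ^ (β + 1 - (n : ℝ))) ^ k := by
          rw [show β + (1 - (n : ℝ)) = β + 1 - (n : ℝ) from by ring]
  -- splitting the integral
  have hcompl : ∫⁻ y, ENNReal.ofReal (dist x y ^ (1 - (n : ℝ)) * ρ y)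
      = ∫⁻ y in (({x} : Set (EuclideanSpace ℝ (Fin n)))ᶜ : Set _),
          ENNReal.ofReal (dist x y ^ (1 - (n : ℝ)) * ρ y) := by
    have h := lintegral_add_compl (μ := volume)
      (fun y => ENNReal.ofReal (dist x y ^ (1 - (n : ℝ)) * ρ y)) (measurableSet_singleton x)
    rw [lintegral_singleton, h0, mul_zero, zero_add] at h
    exact h.symm
  have hmain : ∫⁻ y, ENNReal.ofReal (dist x y ^ (1 - (n : ℝ)) * ρ y)
      ≤ ENNReal.ofReal ((2 ^ ((n : ℝ) - 1) * c₁ + 2 ^ β * c₂) * M ^ e) := by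
    have hcN : (0 : ℝ) ≤ M * (s₀ * 2 ^ ((n : ℝ) - 1)) := by positivity
    have hcF : (0 : ℝ) ≤ s₀ ^ (β + 1 - (n : ℝ)) * 2 ^ β := by positivity
    calc ∫⁻ y, ENNReal.ofReal (dist x y ^ (1 - (n : ℝ)) * ρ y)
        = ∫⁻ y in (({x} : Set (EuclideanSpace ℝ (Fin n)))ᶜ : Set _),
            ENNReal.ofReal (dist x y ^ (1 - (n : ℝ)) * ρ y) := hcompl
      _ ≤ ∫⁻ y in (⋃ k : ℕ, ringN k) ∪ ⋃ k : ℕ, ringF k,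
            ENNReal.ofReal (dist x y ^ (1 - (n : ℝ)) * ρ y) := lintegral_mono_set hcover
      _ ≤ (∫⁻ y in ⋃ k : ℕ, ringN k, ENNReal.ofReal (dist x y ^ (1 - (n : ℝ)) * ρ y))
            + ∫⁻ y in ⋃ k : ℕ, ringF k, ENNReal.ofReal (dist x y ^ (1 - (n : ℝ)) * ρ y) :=
          lintegral_union_le _ _ _
      _ ≤ (∑' k : ℕ, ∫⁻ y in ringN k, ENNReal.ofReal (dist x y ^ (1 - (n : ℝ)) * ρ y))
            + ∑' k : ℕ, ∫⁻ y in ringF k, ENNReal.ofReal (dist x y ^ (1 - (n : ℝ)) * ρ y) :=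
          add_le_add (lintegral_iUnion_le _ _) (lintegral_iUnion_le _ _)
      _ ≤ (∑' k : ℕ, ENNReal.ofReal ((M * (s₀ * 2 ^ ((n : ℝ) - 1))) * (2⁻¹ : ℝ) ^ k))
            + ∑' k : ℕ, ENNReal.ofReal ((s₀ ^ (β + 1 - (n : ℝ)) * 2 ^ β)
                * ((2 : ℝ) ^ (β + 1 - (n : ℝ))) ^ k) :=
          add_le_add (ENNReal.tsum_le_tsum hnear) (ENNReal.tsum_le_tsum hfar)
      _ = ENNReal.ofReal (M * (s₀ * 2 ^ ((n : ℝ) - 1)))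
              * ((1 : ℝ≥0∞) - ENNReal.ofReal ((2 : ℝ)⁻¹))⁻¹
            + ENNReal.ofReal (s₀ ^ (β + 1 - (n : ℝ)) * 2 ^ β)
              * ((1 : ℝ≥0∞) - ENNReal.ofReal ((2 : ℝ) ^ (β + 1 - (n : ℝ))))⁻¹ := by
          rw [geom_sum_ofReal hcN (by norm_num), geom_sum_ofReal hcF hq0.le]
      _ = ENNReal.ofReal ((M * (s₀ * 2 ^ ((n : ℝ) - 1))) * c₁)
            + ENNReal.ofReal ((s₀ ^ (β + 1 - (n : ℝ)) * 2 ^ β) * c₂) := by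
          rw [hc₁eq, hc₂eq, ← ENNReal.ofReal_mul hcN, ← ENNReal.ofReal_mul hcF]
      _ = ENNReal.ofReal ((M * (s₀ * 2 ^ ((n : ℝ) - 1))) * c₁
            + (s₀ ^ (β + 1 - (n : ℝ)) * 2 ^ β) * c₂) :=
          (ENNReal.ofReal_add (by positivity) (by positivity)).symm
      _ = ENNReal.ofReal ((2 ^ ((n : ℝ) - 1) * c₁ + 2 ^ β * c₂) * M ^ e) := by
          congr 1
          have e1 : M * (s₀ * 2 ^ ((n : ℝ) - 1)) = M ^ e * 2 ^ ((n : ℝ) - 1) := by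
            rw [← mul_assoc, hK1]
          have e2 : s₀ ^ (β + 1 - (n : ℝ)) * 2 ^ β = M ^ e * 2 ^ β := by rw [hK2]
          rw [e1, e2]
          ring
  -- conclude
  have hInt_eq : ∫ y, dist x y ^ (1 - (n : ℝ)) * ρ y
      = (∫⁻ y, ENNReal.ofReal (dist x y ^ (1 - (n : ℝ)) * ρ y)).toReal :=
    integral_eq_lintegral_of_nonneg_ae
      (ae_of_all _ fun y => mul_nonneg (Real.rpow_nonneg dist_nonneg _) (hρ y))
      hf.aestronglyMeasurable
  rw [hInt_eq]
  calc (∫⁻ y, ENNReal.ofReal (dist x y ^ (1 - (n : ℝ)) * ρ y)).toReal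
      ≤ (ENNReal.ofReal ((2 ^ ((n : ℝ) - 1) * c₁ + 2 ^ β * c₂) * M ^ e)).toReal :=
        ENNReal.toReal_mono ENNReal.ofReal_ne_top hmain
    _ = (2 ^ ((n : ℝ) - 1) * c₁ + 2 ^ β * c₂) * M ^ e := by
        rw [ENNReal.toReal_ofReal]
        have h1 : (0 : ℝ) < 2 ^ ((n : ℝ) - 1) * c₁ :=
          mul_pos (Real.rpow_pos_of_pos (by norm_num) _) hc₁pos
        have h2 : (0 : ℝ) < 2 ^ β * c₂ :=
          mul_pos (Real.rpow_pos_of_pos (by norm_num) _) hc₂pos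
        nlinarith [hMe]
end
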